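/- The multilinear part Lie(n) of the free Lie algebra over ℤ on n generators has rank (n-1)! as a free abelian group. -/

import Mathlib

noncomputable section

/-- Multilinear Lie monomials in the free (tensor) algebra over `ℤ` on `Fin n`. -/
inductive LieMono (n : ℕ) : Finset (Fin n) → FreeAlgebra ℤ (Fin n) → Prop
  | gen (i : Fin n) : LieMono n {i} (FreeAlgebra.ι ℤ i)
  | bracket {s t : Finset (Fin n)} {a b : FreeAlgebra ℤ (Fin n)} :
      LieMono n s a → LieMono n t b → Disjoint s t → LieMono n (s ∪ t) (a * b - b * a)

/-- The multilinear part `Lie(n)` of the free Lie algebra over `ℤ`. -/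
def LieN (n : ℕ) : Submodule ℤ (FreeAlgebra ℤ (Fin n)) :=
  Submodule.span ℤ {x | LieMono n Finset.univ x}

/-- Left-normed bracket monomial `[[...[x_i, x_{w 1}], ...], x_{w k}]`. -/
def lnorm {m : ℕ} (i : Fin m) (w : List (Fin m)) : FreeAlgebra ℤ (Fin m) :=
  w.foldl (fun a j => a * FreeAlgebra.ι ℤ j - FreeAlgebra.ι ℤ j * a) (FreeAlgebra.ι ℤ i)

lemma lnorm_nil {m : ℕ} (i : Fin m) : lnorm i [] = FreeAlgebra.ι ℤ i := rfl

lemma lnorm_concat {m : ℕ} (i : Fin m) (w : List (Fin m)) (j : Fin m) :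
    lnorm i (w ++ [j]) = lnorm i w * FreeAlgebra.ι ℤ j - FreeAlgebra.ι ℤ j * lnorm i w := by
  simp [lnorm]

lemma lnorm_lieMono {m : ℕ} (i : Fin m) (w : List (Fin m)) (hw : w.Nodup) (hi : i ∉ w) :
    LieMono m (insert i w.toFinset) (lnorm i w) := by
  induction w using List.reverseRecOn with
  | nil => simpa [lnorm_nil] using LieMono.gen i
  | append_singleton w j ih =>
    have hw' : w.Nodup ∧ j ∉ w := by
      constructor
      · exact (List.nodup_append.mp hw).1
      · intro hjw
        exact (List.disjoint_of_nodup_append hw) hjw (by simp)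
    have hi' : i ∉ w := fun h => hi (by simp [h])
    have hij : i ≠ j := fun h => hi (by simp [h])
    have h1 := ih hw'.1 hi'
    have hdisj : Disjoint (insert i w.toFinset) ({j} : Finset (Fin m)) := by
      simp only [Finset.disjoint_singleton_right, Finset.mem_insert, List.mem_toFinset]
      push_neg
      exact ⟨fun h => hij h.symm, hw'.2⟩
    have h2 := LieMono.bracket h1 (LieMono.gen j) hdisj
    have hset : insert i w.toFinset ∪ {j} = insert i (w ++ [j]).toFinset := by
      ext a; simp [or_comm, or_assoc, or_left_comm]
    rw [lnorm_concat]
    rw [hset] at h2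
    exact h2

/-- Generators of the span: left-normed monomials over words with a given support. -/
def Wset {m : ℕ} (i : Fin m) (u : Finset (Fin m)) : Set (FreeAlgebra ℤ (Fin m)) :=
  lnorm i '' {w : List (Fin m) | w.Nodup ∧ w.toFinset = u}

/-- bracketing map as a linear map -/
def brL {m : ℕ} (b : FreeAlgebra ℤ (Fin m)) : FreeAlgebra ℤ (Fin m) →ₗ[ℤ] FreeAlgebra ℤ (Fin m) :=
  LinearMap.mulRight ℤ b - LinearMap.mulLeft ℤ b

@[simp] lemma brL_apply {m : ℕ} (b x : FreeAlgebra ℤ (Fin m)) : brL b x = x * b - b * x := rfl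

lemma bracket_mem {m : ℕ} {t : Finset (Fin m)} {b : FreeAlgebra ℤ (Fin m)}
    (hb : LieMono m t b) :
    ∀ (i : Fin m) (u : Finset (Fin m)) (w : List (Fin m)), w.Nodup → w.toFinset = u →
      Disjoint (insert i u) t →
      lnorm i w * b - b * lnorm i w ∈ Submodule.span ℤ (Wset i (u ∪ t)) := by
  induction hb with
  | gen j =>
    intro i u w hw hwu hdisj
    have hj : j ∉ insert i u := Finset.disjoint_singleton_right.mp hdisj
    have hjw : j ∉ w := fun h => hj (by simp [← hwu, Finset.mem_insert, List.mem_toFinset, h])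
    apply Submodule.subset_span
    refine ⟨w ++ [j], ⟨?_, ?_⟩, lnorm_concat i w j⟩
    · simp [List.nodup_append, hw, hjw]; intro a ha h; exact hjw (h ▸ ha)
    · simp [hwu]
  | @bracket t₁ t₂ b₁ b₂ hb₁ hb₂ hd ih₁ ih₂ =>
    intro i u w hw hwu hdisj
    have hit₁ : Disjoint (insert i u) t₁ := hdisj.mono_right Finset.subset_union_left
    have hit₂ : Disjoint (insert i u) t₂ := hdisj.mono_right Finset.subset_union_right
    -- key: for any x in span (Wset i u'), brL c x ∈ span (Wset i (u' ∪ t')) if appropriate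
    have key : ∀ (t' : Finset (Fin m)) (b' : FreeAlgebra ℤ (Fin m)),
        (∀ (u' : Finset (Fin m)) (w' : List (Fin m)), w'.Nodup → w'.toFinset = u' →
          Disjoint (insert i u') t' →
          lnorm i w' * b' - b' * lnorm i w' ∈ Submodule.span ℤ (Wset i (u' ∪ t'))) →
        ∀ (u' : Finset (Fin m)), Disjoint (insert i u') t' →
        ∀ x ∈ Submodule.span ℤ (Wset i u'),
          brL b' x ∈ Submodule.span ℤ (Wset i (u' ∪ t')) := by
      intro t' b' ih u' hdis x hx
      have : brL b' x ∈ Submodule.map (brL b') (Submodule.span ℤ (Wset i u')) :=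
        Submodule.mem_map_of_mem hx
      rw [LinearMap.map_span] at this
      refine Submodule.span_le.mpr ?_ this
      rintro _ ⟨_, ⟨w', ⟨hw', rfl⟩, rfl⟩, rfl⟩
      simpa using ih _ w' hw' rfl hdis
    -- i ∉ t₁, i ∉ t₂
    have hi1 : i ∉ t₁ := fun h => (Finset.disjoint_left.mp hit₁) (Finset.mem_insert_self i u) h
    have hi2 : i ∉ t₂ := fun h => (Finset.disjoint_left.mp hit₂) (Finset.mem_insert_self i u) h
    have step1 : lnorm i w * b₁ - b₁ * lnorm i w ∈ Submodule.span ℤ (Wset i (u ∪ t₁)) :=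
      ih₁ i u w hw hwu hit₁
    have step1' : brL b₂ (lnorm i w * b₁ - b₁ * lnorm i w) ∈
        Submodule.span ℤ (Wset i ((u ∪ t₁) ∪ t₂)) := by
      refine key t₂ b₂ (fun u' w' h1 h2 h3 => ih₂ i u' w' h1 h2 h3) (u ∪ t₁) ?_ _ step1
      rw [Finset.disjoint_left]
      intro a ha hat
      rcases Finset.mem_insert.mp ha with rfl | ha
      · exact hi2 hat
      · rcases Finset.mem_union.mp ha with ha | ha
        · exact (Finset.disjoint_left.mp hit₂) (Finset.mem_insert_of_mem ha) hat
        · exact (Finset.disjoint_left.mp hd) ha hat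
    have step2 : lnorm i w * b₂ - b₂ * lnorm i w ∈ Submodule.span ℤ (Wset i (u ∪ t₂)) :=
      ih₂ i u w hw hwu hit₂
    have step2' : brL b₁ (lnorm i w * b₂ - b₂ * lnorm i w) ∈
        Submodule.span ℤ (Wset i ((u ∪ t₂) ∪ t₁)) := by
      refine key t₁ b₁ (fun u' w' h1 h2 h3 => ih₁ i u' w' h1 h2 h3) (u ∪ t₂) ?_ _ step2
      rw [Finset.disjoint_left]
      intro a ha hat
      rcases Finset.mem_insert.mp ha with rfl | ha
      · exact hi1 hat
      · rcases Finset.mem_union.mp ha with ha | ha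
        · exact (Finset.disjoint_left.mp hit₁) (Finset.mem_insert_of_mem ha) hat
        · exact (Finset.disjoint_left.mp hd.symm) ha hat
    have hu1 : (u ∪ t₁) ∪ t₂ = u ∪ (t₁ ∪ t₂) := Finset.union_assoc u t₁ t₂
    have hu2 : (u ∪ t₂) ∪ t₁ = u ∪ (t₁ ∪ t₂) := by
      rw [Finset.union_assoc, Finset.union_comm t₂ t₁]
    rw [hu1] at step1'
    rw [hu2] at step2'
    have hident : lnorm i w * (b₁ * b₂ - b₂ * b₁) - (b₁ * b₂ - b₂ * b₁) * lnorm i w =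
        brL b₂ (lnorm i w * b₁ - b₁ * lnorm i w) - brL b₁ (lnorm i w * b₂ - b₂ * lnorm i w) := by
      simp only [brL_apply]
      noncomm_ring
    rw [hident]
    exact sub_mem step1' step2'

lemma lieMono_mem_span {m : ℕ} {s : Finset (Fin m)} {x : FreeAlgebra ℤ (Fin m)}
    (h : LieMono m s x) :
    ∀ i ∈ s, x ∈ Submodule.span ℤ (Wset i (s.erase i)) := by
  induction h with
  | gen j =>
    intro i hi
    have : i = j := by simpa using hi
    subst this
    apply Submodule.subset_span
    exact ⟨[], ⟨List.nodup_nil, by simp⟩, rfl⟩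
  | @bracket s t a b ha hb hd iha ihb =>
    intro i hi
    rcases Finset.mem_union.mp hi with his | hit
    · have h1 := iha i his
      have h2 : brL b a ∈ Submodule.map (brL b) (Submodule.span ℤ (Wset i (s.erase i))) :=
        Submodule.mem_map_of_mem h1
      rw [LinearMap.map_span] at h2
      have h3 : brL b a ∈ Submodule.span ℤ (Wset i (s.erase i ∪ t)) := by
        refine Submodule.span_le.mpr ?_ h2
        rintro _ ⟨_, ⟨w, ⟨hw, hwt⟩, rfl⟩, rfl⟩
        simpa using bracket_mem hb i (s.erase i) w hw hwt
          (by rwa [Finset.insert_erase his])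
      have hit' : i ∉ t := fun h => (Finset.disjoint_left.mp hd) his h
      have hset : s.erase i ∪ t = (s ∪ t).erase i := by
        ext a; simp only [Finset.mem_union, Finset.mem_erase]
        constructor
        · rintro (⟨h1, h2⟩ | h1)
          · exact ⟨h1, Or.inl h2⟩
          · exact ⟨fun he => hit' (he ▸ h1), Or.inr h1⟩
        · rintro ⟨h1, h2 | h2⟩
          · exact Or.inl ⟨h1, h2⟩
          · exact Or.inr h2
      rw [hset] at h3
      simpa using h3
    · have h1 := ihb i hit
      have h2 : brL a b ∈ Submodule.map (brL a) (Submodule.span ℤ (Wset i (t.erase i))) :=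
        Submodule.mem_map_of_mem h1
      rw [LinearMap.map_span] at h2
      have h3 : brL a b ∈ Submodule.span ℤ (Wset i (t.erase i ∪ s)) := by
        refine Submodule.span_le.mpr ?_ h2
        rintro _ ⟨_, ⟨w, ⟨hw, hwt⟩, rfl⟩, rfl⟩
        simpa using bracket_mem ha i (t.erase i) w hw hwt
          (by rw [Finset.insert_erase hit]; exact hd.symm)
      have his' : i ∉ s := fun h => (Finset.disjoint_left.mp hd) h hit
      have hset : t.erase i ∪ s = (s ∪ t).erase i := by
        ext a; simp only [Finset.mem_union, Finset.mem_erase]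
        constructor
        · rintro (⟨h1, h2⟩ | h1)
          · exact ⟨h1, Or.inr h2⟩
          · exact ⟨fun he => his' (he ▸ h1), Or.inl h1⟩
        · rintro ⟨h1, h2 | h2⟩
          · exact Or.inr h2
          · exact Or.inl ⟨h1, h2⟩
      rw [hset] at h3
      have : a * b - b * a = -(brL a b) := by rw [brL_apply]; abel
      rw [this]
      exact neg_mem h3

open FreeAlgebra in
/-- Coefficient of the word `u` in an element of the free algebra. -/
def coeffL {m : ℕ} (u : List (Fin m)) : FreeAlgebra ℤ (Fin m) →ₗ[ℤ] ℤ :=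
  (Finsupp.lapply (FreeMonoid.ofList u)).comp
    ((MonoidAlgebra.coeffLinearEquiv ℤ).toLinearMap.comp
      (equivMonoidAlgebraFreeMonoid (R := ℤ) (X := Fin m)).toLinearMap)

lemma coeffL_apply {m : ℕ} (u : List (Fin m)) (x : FreeAlgebra ℤ (Fin m)) :
    coeffL u x = (FreeAlgebra.equivMonoidAlgebraFreeMonoid (R := ℤ) x).coeff (FreeMonoid.ofList u) :=
  rfl

lemma equiv_ι {m : ℕ} (x : Fin m) :
    FreeAlgebra.equivMonoidAlgebraFreeMonoid (R := ℤ) (FreeAlgebra.ι ℤ x) =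
      MonoidAlgebra.single (FreeMonoid.of x) 1 := by
  simp only [FreeAlgebra.equivMonoidAlgebraFreeMonoid, MonoidAlgebra.of_apply,
    AlgEquiv.ofAlgHom_apply, FreeAlgebra.lift_ι_apply]

lemma coeff_lnorm {m : ℕ} (i : Fin m) (w : List (Fin m)) (hw : i ∉ w) (v : List (Fin m)) :
    coeffL (i :: v) (lnorm i w) = if v = w then 1 else 0 := by
  classical
  induction w using List.reverseRecOn generalizing v with
  | nil =>
    rw [lnorm_nil, coeffL_apply, equiv_ι]
    rw [MonoidAlgebra.single_apply]
    by_cases h : v = []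
    · subst h; simp
    · have hne : FreeMonoid.of i ≠ FreeMonoid.ofList (i :: v) := by
        intro hc
        have := congrArg FreeMonoid.toList hc
        rw [FreeMonoid.toList_of, FreeMonoid.toList_ofList] at this
        exact h (by injection this with _ h2; exact h2.symm)
      have hne2 : FreeMonoid.ofList v ≠ 1 := by
        intro hc
        have := congrArg FreeMonoid.toList hc
        rw [FreeMonoid.toList_ofList] at this
        exact h (by simpa using this)
      simp [hne, h, hne2]
  | append_singleton w j ih =>
    have hiw : i ∉ w := fun h => hw (by simp [h])
    have hij : i ≠ j := fun h => hw (by simp [h])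
    set S : MonoidAlgebra ℤ (FreeMonoid (Fin m)) :=
      MonoidAlgebra.single (FreeMonoid.of j) 1 with hS
    set E : MonoidAlgebra ℤ (FreeMonoid (Fin m)) :=
      FreeAlgebra.equivMonoidAlgebraFreeMonoid (R := ℤ) (lnorm i w) with hE
    have expand : (FreeAlgebra.equivMonoidAlgebraFreeMonoid (R := ℤ) (lnorm i (w ++ [j]))) =
        E * S - S * E := by
      rw [lnorm_concat, map_sub, map_mul, map_mul, equiv_ι]
    have term2 : (S * E).coeff (FreeMonoid.ofList (i :: v)) = 0 := by
      by_contra hne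
      have hmem : FreeMonoid.ofList (i :: v) ∈ (S * E).coeff.support :=
        Finsupp.mem_support_iff.mpr hne
      have hsub := MonoidAlgebra.support_coeff_mul_subset S E hmem
      rw [Finset.mem_mul] at hsub
      obtain ⟨y, hy, z, hz, hyz⟩ := hsub
      have hy' : y = FreeMonoid.of j := by
        have := Finsupp.support_single_subset (hS ▸ hy)
        exact Finset.mem_singleton.mp this
      subst hy'
      have h1 := congrArg FreeMonoid.toList hyz
      rw [FreeMonoid.toList_ofList] at h1
      have h2 : j :: FreeMonoid.toList z = i :: v := by
        simpa [FreeMonoid.toList_of] using h1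
      injection h2 with h3 _
      exact hij h3.symm
    by_cases hv : ∃ v', v = v' ++ [j]
    · obtain ⟨v', rfl⟩ := hv
      have key : ∀ a : FreeMonoid (Fin m),
          a * FreeMonoid.of j = FreeMonoid.ofList (i :: (v' ++ [j])) ↔
            a = FreeMonoid.ofList (i :: v') := by
        intro a
        constructor
        · intro h
          have h1 := congrArg FreeMonoid.toList h
          rw [FreeMonoid.toList_ofList] at h1
          have h2 : FreeMonoid.toList a ++ [j] = (i :: v') ++ [j] := by
            simpa [FreeMonoid.toList_of] using h1
          have h3 := (List.append_left_inj [j]).mp h2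
          exact FreeMonoid.toList.injective (by rw [h3, FreeMonoid.toList_ofList])
        · rintro rfl
          apply FreeMonoid.toList.injective
          simp [FreeMonoid.toList_of]
      have term1 : (E * S).coeff (FreeMonoid.ofList (i :: (v' ++ [j]))) =
          E.coeff (FreeMonoid.ofList (i :: v')) := by
        rw [hS, MonoidAlgebra.coeff_mul_single_eq_coeff_mul (x := E) _ (fun a _ => key a), mul_one]
      rw [coeffL_apply, expand, MonoidAlgebra.coeff_sub, Finsupp.sub_apply, term1, term2, sub_zero]
      have hih := ih hiw v'
      rw [coeffL_apply] at hih
      rw [← hE] at hih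
      rw [hih]
      by_cases h : v' = w
      · simp [h]
      · have h' : v' ++ [j] ≠ w ++ [j] := fun hc => h ((List.append_left_inj [j]).mp hc)
        simp [h, h']
    · have term1 : (E * S).coeff (FreeMonoid.ofList (i :: v)) = 0 := by
        by_contra hne
        have hmem : FreeMonoid.ofList (i :: v) ∈ (E * S).coeff.support :=
          Finsupp.mem_support_iff.mpr hne
        have hsub := MonoidAlgebra.support_coeff_mul_subset E S hmem
        rw [Finset.mem_mul] at hsub
        obtain ⟨y, hy, z, hz, hyz⟩ := hsub
        have hz' : z = FreeMonoid.of j := by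
          have := Finsupp.support_single_subset (hS ▸ hz)
          exact Finset.mem_singleton.mp this
        subst hz'
        have h1 := congrArg FreeMonoid.toList hyz
        rw [FreeMonoid.toList_ofList] at h1
        have h2 : FreeMonoid.toList y ++ [j] = i :: v := by
          simpa [FreeMonoid.toList_of] using h1
        cases hyl : FreeMonoid.toList y with
        | nil => rw [hyl] at h2; simp at h2; exact hij h2.1.symm
        | cons hd tl =>
          rw [hyl] at h2
          simp only [List.cons_append, List.cons.injEq] at h2
          exact hv ⟨tl, h2.2.symm⟩
      rw [coeffL_apply, expand, MonoidAlgebra.coeff_sub, Finsupp.sub_apply, term1, term2, sub_zero]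
      have hne : v ≠ w ++ [j] := fun h => hv ⟨w, h⟩
      simp [hne]

section Main

variable (n : ℕ)

/-- Words indexing the basis: nodup lists covering all nonzero generators. -/
def PW : Set (List (Fin (n + 1))) :=
  {w : List (Fin (n + 1)) | w.Nodup ∧ w.toFinset = Finset.univ.erase 0}

/-- The basis family. -/
def fam (p : PW n) : FreeAlgebra ℤ (Fin (n + 1)) := lnorm 0 p.1

lemma zero_not_mem_pw {w : List (Fin (n + 1))} (hw : w ∈ PW n) : (0 : Fin (n + 1)) ∉ w := by
  intro h
  have : (0 : Fin (n + 1)) ∈ w.toFinset := List.mem_toFinset.mpr h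
  rw [hw.2] at this
  exact (Finset.mem_erase.mp this).1 rfl

lemma fam_linearIndependent : LinearIndependent ℤ (fam n) := by
  classical
  rw [linearIndependent_iff]
  intro l hl
  ext p
  have hcoeff : ∀ q : PW n, coeffL (0 :: p.1) (fam n q) = if p = q then 1 else 0 := by
    intro q
    rw [fam, coeff_lnorm 0 q.1 (zero_not_mem_pw n q.2) p.1]
    by_cases h : p = q
    · simp [h]
    · have hne : p.1 ≠ q.1 := fun hc => h (Subtype.ext hc)
      simp [h, hne]
  have happ := congrArg (coeffL (0 :: p.1)) hl
  rw [map_zero] at happ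
  rw [Finsupp.linearCombination_apply, Finsupp.sum, map_sum] at happ
  simp only [map_smul, hcoeff, smul_eq_mul] at happ
  rw [Finset.sum_congr rfl (fun q _ =>
    show (l q * if p = q then 1 else 0) = if q = p then l q else 0 by
      by_cases h : q = p
      · subst h; simp
      · simp [h, Ne.symm h])] at happ
  rw [Finset.sum_ite_eq' l.support p (fun q => l q)] at happ
  by_cases hp : p ∈ l.support
  · rw [if_pos hp] at happ; simpa using happ
  · exact Finsupp.notMem_support_iff.mp hp

lemma span_eq : LieN (n + 1) = Submodule.span ℤ (Set.range (fam n)) := by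
  have hWset : Wset (0 : Fin (n + 1)) (Finset.univ.erase 0) = Set.range (fam n) := by
    rw [Wset, Set.image_eq_range]
    rfl
  apply le_antisymm
  · rw [LieN]
    apply Submodule.span_le.mpr
    intro x hx
    have := lieMono_mem_span hx 0 (Finset.mem_univ 0)
    rwa [hWset] at this
  · apply Submodule.span_le.mpr
    rintro _ ⟨p, rfl⟩
    apply Submodule.subset_span
    have h1 := lnorm_lieMono 0 p.1 p.2.1 (zero_not_mem_pw n p.2)
    rw [p.2.2, Finset.insert_erase (Finset.mem_univ 0)] at h1
    exact h1

lemma card_pw : Cardinal.mk (PW n) = Nat.factorial n := by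
  classical
  have hcard : Fintype.card (↥(Finset.univ.erase (0 : Fin (n + 1)))) = n := by
    rw [Fintype.card_coe, Finset.card_erase_of_mem (Finset.mem_univ 0), Finset.card_univ,
      Fintype.card_fin]
    omega
  set s := Finset.univ.erase (0 : Fin (n + 1)) with hs
  -- bijection (Fin n ≃ ↥s) → PW n
  have hF : ∀ e : Fin n ≃ ↥s, (List.ofFn (fun k => ((e k : ↥s) : Fin (n + 1)))) ∈ PW n := by
    intro e
    constructor
    · rw [List.nodup_ofFn]
      exact Subtype.val_injective.comp e.injective
    · ext a
      simp only [List.mem_toFinset, List.mem_ofFn]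
      constructor
      · rintro ⟨k, rfl⟩; exact (e k).2
      · intro ha; exact ⟨e.symm ⟨a, ha⟩, by simp⟩
  let F : (Fin n ≃ ↥s) → PW n := fun e => ⟨_, hF e⟩
  have hFbij : Function.Bijective F := by
    constructor
    · intro e e' hee
      have h1 : List.ofFn (fun k => ((e k : ↥s) : Fin (n + 1))) =
          List.ofFn (fun k => ((e' k : ↥s) : Fin (n + 1))) := congrArg Subtype.val hee
      rw [List.ofFn_inj] at h1
      apply Equiv.ext
      intro k
      exact Subtype.ext (congrFun h1 k)
    · rintro ⟨w, hwn, hwt⟩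
      have hlen : w.length = n := by
        rw [← List.toFinset_card_of_nodup hwn, hwt, Finset.card_erase_of_mem (Finset.mem_univ 0),
          Finset.card_univ, Fintype.card_fin]
        omega
      have hmem : ∀ k : Fin n, w.get ⟨k.1, by omega⟩ ∈ s := by
        intro k
        rw [hs, ← hwt, List.mem_toFinset]
        exact List.get_mem w _
      let g : Fin n → ↥s := fun k => ⟨w.get ⟨k.1, by omega⟩, hmem k⟩
      have hginj : Function.Injective g := by
        intro k1 k2 hk
        have h1 : w.get ⟨k1.1, by omega⟩ = w.get ⟨k2.1, by omega⟩ :=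
          congrArg Subtype.val hk
        have := List.nodup_iff_injective_get.mp hwn h1
        exact Fin.ext (by injection this)
      let e : Fin n ≃ ↥s := Equiv.ofBijective g
        ((Fintype.bijective_iff_injective_and_card g).mpr
          ⟨hginj, by rw [Fintype.card_fin, hcard]⟩)
      refine ⟨e, ?_⟩
      apply Subtype.ext
      show List.ofFn (fun k => ((e k : ↥s) : Fin (n + 1))) = w
      apply List.ext_getElem (by simp [hlen])
      intro k h1 h2
      rw [List.getElem_ofFn]
      show ((g ⟨k, by simpa using h1⟩ : ↥s) : Fin (n + 1)) = w[k]
      simp [g, List.get_eq_getElem]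
  have := Cardinal.mk_congr (Equiv.ofBijective F hFbij)
  rw [← this, Cardinal.mk_fintype, Fintype.card_equiv (Fintype.equivFinOfCardEq hcard).symm,
    Fintype.card_fin]

end Main

/-- The multilinear part of the free Lie algebra over `ℤ` on `n + 1`
generators is a free abelian group of rank `n!` (i.e. `(n+1-1)!`). -/
theorem statement1 (n : ℕ) :
    Module.Free ℤ ↥(LieN (n + 1)) ∧
      Module.rank ℤ ↥(LieN (n + 1)) = Nat.factorial n := by
  have hb : Module.Basis (PW n) ℤ ↥(Submodule.span ℤ (Set.range (fam n))) :=
    Module.Basis.span (fam_linearIndependent n)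
  rw [span_eq n]
  exact ⟨Module.Free.of_basis hb, by rw [← hb.mk_eq_rank'', card_pw n]⟩
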